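/- In the number field ℓ = ℚ[x]/(x⁴ + 2x² − 19), with α the image of x, the element π_w = (α² + α)/2 is an algebraic integer, and there exists a unit u of the ring of integers of ℓ such that π_w² = α²·u. (Thus π_w is a uniformizer for the ramified place of ℓ lying over the prime (β) of ℚ(√5), where β = −1 + 2√5 corresponds to α² in ℓ.) -/
import Mathlib


open Polynomial

/-- The quartic number field `ℓ = ℚ[x]/(x⁴ + 2x² - 19)`. -/
abbrev ell : Type := AdjoinRoot (X ^ 4 + 2 * X ^ 2 - 19 : ℚ[X])

/-- `α`, the image of `x` in `ℓ = ℚ[x]/(x⁴ + 2x² - 19)`; it is a square root of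
`β = -1 + 2√5`. -/
noncomputable def alpha : ell := AdjoinRoot.root (X ^ 4 + 2 * X ^ 2 - 19 : ℚ[X])

/-- In `ℓ = ℚ[x]/(x⁴ + 2x² - 19)`, the element `π_w = (√β + β)/2 = (α + α²)/2` is an
algebraic integer, and `π_w² = α² u = β u` for some unit `u` of the ring of integers of `ℓ`
(so that `π_w` is a uniformizer for the ramified place of `ℓ` over the prime `(β)` of
`ℚ(√5)`). -/
theorem stmt_17 [Fact (Irreducible (X ^ 4 + 2 * X ^ 2 - 19 : ℚ[X]))] :
    IsIntegral ℤ ((alpha ^ 2 + alpha) / 2) ∧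
    ∃ u : ell, u ≠ 0 ∧ IsIntegral ℤ u ∧ IsIntegral ℤ u⁻¹ ∧
      ((alpha ^ 2 + alpha) / 2) ^ 2 = alpha ^ 2 * u := by
  have h : alpha ^ 4 + 2 * alpha ^ 2 - 19 = 0 := by
    have := AdjoinRoot.eval₂_root (X ^ 4 + 2 * X ^ 2 - 19 : ℚ[X])
    simpa [alpha] using this
  set y : ell := (alpha + 1) / 2 with hy_def
  have hy4 : y ^ 4 - 2 * y ^ 3 + 2 * y ^ 2 - y - 1 = 0 := by
    rw [hy_def]; linear_combination h/16
  have hyint : IsIntegral ℤ y := by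
    refine ⟨X ^ 4 - 2 * X ^ 3 + 2 * X ^ 2 - X - 1, ?_, ?_⟩
    · monicity!
    · rw [← aeval_def]
      simp only [map_sub, map_add, map_mul, map_pow, aeval_X, map_ofNat, map_one]
      linear_combination hy4
  have haint : IsIntegral ℤ alpha := by
    refine ⟨X ^ 4 + 2 * X ^ 2 - 19, ?_, ?_⟩
    · monicity!
    · rw [← aeval_def]
      simp only [map_sub, map_add, map_mul, map_pow, aeval_X, map_ofNat]
      linear_combination h
  have hinv : y * (y ^ 3 - 2 * y ^ 2 + 2 * y - 1) = 1 := by linear_combination hy4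
  have hy0 : y ≠ 0 := by
    intro h0
    rw [h0, zero_mul] at hinv
    exact zero_ne_one hinv
  have hyinv : y⁻¹ = y ^ 3 - 2 * y ^ 2 + 2 * y - 1 := inv_eq_of_mul_eq_one_right hinv
  have hyinvint : IsIntegral ℤ y⁻¹ := by
    rw [hyinv]
    have h1 : IsIntegral ℤ (1 : ell) := isIntegral_one
    have h2 : IsIntegral ℤ (2 : ell) := by
      have : (2 : ell) = 1 + 1 := by norm_num
      rw [this]; exact h1.add h1
    exact (((hyint.pow 3).sub (h2.mul (hyint.pow 2))).add (h2.mul hyint)).sub h1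
  have hpi : (alpha ^ 2 + alpha) / 2 = alpha * y := by
    rw [hy_def]; ring
  constructor
  · rw [hpi]; exact haint.mul hyint
  · refine ⟨y ^ 2, pow_ne_zero 2 hy0, hyint.pow 2, ?_, by rw [hpi]; ring⟩
    rw [← inv_pow]
    exact hyinvint.pow 2
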